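/- Let φ be vertex potentials with φ(s) = 1 and φ(t) = 0 on a graph with nonnegative edge capacities u_e. Then there exists x ∈ [0,1] such that the cut S_x = {v : φ(v) > x} has capacity at most Σ_{(u,v)∈E} |φ(u) - φ(v)|·u_{(u,v)}. -/

import Mathlib

open Finset MeasureTheory

/-- Threshold rounding of potentials: for potentials φ with φ(s)=1, φ(t)=0, some
threshold x ∈ [0,1] yields a cut S_x = {v : φ(v) > x} whose capacity is at most
Σ_e |φ(u)-φ(v)|·u_e. -/
theorem threshold_cut_bound {V E : Type*} [Fintype V] [Fintype E]
    (ep : E → V × V) (s t : V) (hst : s ≠ t)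
    (u : E → ℝ) (hu : ∀ e, 0 ≤ u e)
    (φ : V → ℝ) (hφs : φ s = 1) (hφt : φ t = 0) :
    ∃ x : ℝ, 0 ≤ x ∧ x ≤ 1 ∧
      ∑ e ∈ Finset.univ.filter (fun e =>
          ((x < φ (ep e).1 ∧ ¬ x < φ (ep e).2) ∨ (¬ x < φ (ep e).1 ∧ x < φ (ep e).2))),
        u e
      ≤ ∑ e, |φ (ep e).1 - φ (ep e).2| * u e := by
  classical
  set a : E → ℝ := fun e => φ (ep e).1 with ha
  set b : E → ℝ := fun e => φ (ep e).2 with hb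
  set c : ℝ := ∑ e, |φ (ep e).1 - φ (ep e).2| * u e with hc
  set f : ℝ → ℝ := fun x =>
    ∑ e, Set.indicator (Set.Ico (min (a e) (b e)) (max (a e) (b e))) (fun _ => u e) x with hf
  have hcond : ∀ e (x : ℝ),
      ((x < a e ∧ ¬ x < b e) ∨ (¬ x < a e ∧ x < b e)) ↔
      x ∈ Set.Ico (min (a e) (b e)) (max (a e) (b e)) := by
    intro e x
    simp only [Set.mem_Ico, le_min_iff, min_le_iff, lt_max_iff, max_lt_iff, not_lt]
    constructor
    · rintro (⟨h1, h2⟩ | ⟨h1, h2⟩)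
      · exact ⟨Or.inr h2, Or.inl h1⟩
      · exact ⟨Or.inl h1, Or.inr h2⟩
    · rintro ⟨h1 | h1, h2 | h2⟩
      · linarith
      · exact Or.inr ⟨h1, h2⟩
      · exact Or.inl ⟨h2, h1⟩
      · linarith
  have hfg : ∀ x : ℝ,
      (∑ e ∈ Finset.univ.filter (fun e =>
          ((x < φ (ep e).1 ∧ ¬ x < φ (ep e).2) ∨ (¬ x < φ (ep e).1 ∧ x < φ (ep e).2))),
        u e) = f x := by
    intro x
    rw [Finset.sum_filter]
    refine Finset.sum_congr rfl fun e _ => ?_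
    by_cases h : (x < a e ∧ ¬ x < b e) ∨ (¬ x < a e ∧ x < b e)
    · rw [if_pos h, Set.indicator_of_mem ((hcond e x).1 h)]
    · rw [if_neg h, Set.indicator_of_notMem (fun hm => h ((hcond e x).2 hm))]
  -- integrability
  have hint : ∀ e : E, IntegrableOn
      (Set.indicator (Set.Ico (min (a e) (b e)) (max (a e) (b e))) (fun _ => u e))
      (Set.Icc (0:ℝ) 1) := by
    intro e
    refine (integrableOn_const ?_).indicator measurableSet_Ico
    simp [Real.volume_Icc]
  have hfint : IntegrableOn f (Set.Icc (0:ℝ) 1) := by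
    exact MeasureTheory.integrable_finset_sum _ (fun e _ => hint e)
  -- integral bound
  have hIbound : ∫ x in Set.Icc (0:ℝ) 1, f x ≤ c := by
    rw [hf, MeasureTheory.integral_finset_sum _ (fun e _ => hint e)]
    refine Finset.sum_le_sum fun e _ => ?_
    rw [MeasureTheory.setIntegral_indicator measurableSet_Ico, MeasureTheory.setIntegral_const,
      smul_eq_mul]
    have hμ : (volume (Set.Icc (0:ℝ) 1 ∩
        Set.Ico (min (a e) (b e)) (max (a e) (b e)))).toReal ≤ |a e - b e| := by
      have h1 : volume (Set.Icc (0:ℝ) 1 ∩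
          Set.Ico (min (a e) (b e)) (max (a e) (b e))) ≤
          volume (Set.Ico (min (a e) (b e)) (max (a e) (b e))) :=
        measure_mono Set.inter_subset_right
      have h2 : volume (Set.Ico (min (a e) (b e)) (max (a e) (b e))) =
          ENNReal.ofReal (|a e - b e|) := by
        rw [Real.volume_Ico, max_sub_min_eq_abs, abs_sub_comm]
      calc (volume (Set.Icc (0:ℝ) 1 ∩
            Set.Ico (min (a e) (b e)) (max (a e) (b e)))).toReal
          ≤ (ENNReal.ofReal (|a e - b e|)).toReal := by
            refine ENNReal.toReal_mono (by simp) ?_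
            rw [← h2]; exact h1
        _ ≤ |a e - b e| := le_of_eq (ENNReal.toReal_ofReal (abs_nonneg _))
    calc (volume (Set.Icc (0:ℝ) 1 ∩
          Set.Ico (min (a e) (b e)) (max (a e) (b e)))).toReal * u e
        ≤ |a e - b e| * u e := mul_le_mul_of_nonneg_right hμ (hu e)
      _ = |φ (ep e).1 - φ (ep e).2| * u e := rfl
  -- contradiction argument
  by_contra hcon
  push_neg at hcon
  simp only [not_lt] at hfg
  have hlt : ∀ x ∈ Set.Icc (0:ℝ) 1, c < f x := by
    intro x hx
    have := hcon x hx.1 hx.2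
    rwa [hfg x] at this
  have hpos : 0 < ∫ x in Set.Icc (0:ℝ) 1, (f x - c) := by
    rw [MeasureTheory.setIntegral_pos_iff_support_of_nonneg_ae]
    · refine lt_of_lt_of_le (b := volume (Set.Icc (0:ℝ) 1)) ?_ (measure_mono ?_)
      · simp [Real.volume_Icc]
      · intro x hx
        refine ⟨?_, hx⟩
        simp only [Function.mem_support]
        have := hlt x hx
        intro h0
        linarith
    · filter_upwards [MeasureTheory.ae_restrict_mem measurableSet_Icc] with x hx
      have := hlt x hx
      simp only [Pi.zero_apply]
      linarith
    · exact hfint.sub (integrableOn_const (by simp [Real.volume_Icc]))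
  rw [MeasureTheory.integral_sub hfint
    (integrableOn_const (by simp [Real.volume_Icc])),
    MeasureTheory.setIntegral_const, smul_eq_mul] at hpos
  have hvol : volume.real (Set.Icc (0:ℝ) 1) = 1 := by simp [Real.volume_Icc]
  rw [hvol, one_mul] at hpos
  linarith
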